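/- For the matrix M_{+-} = M₊M₋ there is no basis of eigenvectors; i.e., M₊M₋ is not diagonalizable (over ℂ). In particular its eigenvalue 4 = (-2)² has algebraic multiplicity greater than its geometric multiplicity. -/

import Mathlib

def MplusC : Matrix (Fin 8) (Fin 8) ℂ :=
  !![0,0,0,0,1,1,1,1;
     0,0,1,3,0,0,0,0;
     0,2,2,0,0,0,0,0;
     3,1,0,0,0,0,0,0;
     1,1,1,1,0,0,0,0;
     0,0,0,0,0,0,1,3;
     0,0,0,0,0,2,2,0;
     0,0,0,0,3,1,0,0]

def MminusC : Matrix (Fin 8) (Fin 8) ℂ :=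
  !![0,0,1,3,0,0,0,0;
     0,2,2,0,0,0,0,0;
     3,1,0,0,0,0,0,0;
     0,0,0,0,1,1,1,1;
     0,0,0,0,0,0,1,3;
     0,0,0,0,0,2,2,0;
     0,0,0,0,3,1,0,0;
     1,1,1,1,0,0,0,0]

section Aux

def mpZ : Matrix (Fin 8) (Fin 8) ℤ :=
  !![0,0,0,0,1,1,1,1;
     0,0,1,3,0,0,0,0;
     0,2,2,0,0,0,0,0;
     3,1,0,0,0,0,0,0;
     1,1,1,1,0,0,0,0;
     0,0,0,0,0,0,1,3;
     0,0,0,0,0,2,2,0;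
     0,0,0,0,3,1,0,0]

def mmZ : Matrix (Fin 8) (Fin 8) ℤ :=
  !![0,0,1,3,0,0,0,0;
     0,2,2,0,0,0,0,0;
     3,1,0,0,0,0,0,0;
     0,0,0,0,1,1,1,1;
     0,0,0,0,0,0,1,3;
     0,0,0,0,0,2,2,0;
     0,0,0,0,3,1,0,0;
     1,1,1,1,0,0,0,0]

def e0 : Matrix (Fin 8) (Fin 8) ℤ :=
  !![1,1,1,1,3,3,3,3;
     3,1,0,0,3,3,3,3;
     6,6,4,0,0,0,0,0;
     0,2,5,9,0,0,0,0;
     3,3,3,3,1,1,1,1;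
     3,3,3,3,3,1,0,0;
     0,0,0,0,6,6,4,0;
     0,0,0,0,0,2,5,9]

def f1 : Matrix (Fin 8) (Fin 8) ℤ :=
  !![0,1,1,1,3,3,3,3;
     3,0,0,0,3,3,3,3;
     6,6,3,0,0,0,0,0;
     0,2,5,8,0,0,0,0;
     3,3,3,3,0,1,1,1;
     3,3,3,3,3,0,0,0;
     0,0,0,0,6,6,3,0;
     0,0,0,0,0,2,5,8]

def f2 : Matrix (Fin 8) (Fin 8) ℤ :=
  !![-3,1,1,1,3,3,3,3;
     3,-3,0,0,3,3,3,3;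
     6,6,0,0,0,0,0,0;
     0,2,5,5,0,0,0,0;
     3,3,3,3,-3,1,1,1;
     3,3,3,3,3,-3,0,0;
     0,0,0,0,6,6,0,0;
     0,0,0,0,0,2,5,5]

def f3 : Matrix (Fin 8) (Fin 8) ℤ :=
  !![-15,1,1,1,3,3,3,3;
     3,-15,0,0,3,3,3,3;
     6,6,-12,0,0,0,0,0;
     0,2,5,-7,0,0,0,0;
     3,3,3,3,-15,1,1,1;
     3,3,3,3,3,-15,0,0;
     0,0,0,0,6,6,-12,0;
     0,0,0,0,0,2,5,-7]

def q3 : Matrix (Fin 8) (Fin 8) ℤ :=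
  !![0,0,0,0,0,0,0,0;
     0,0,0,0,0,0,0,0;
     864,864,864,864,-864,-864,-864,-864;
     -864,-864,-864,-864,864,864,864,864;
     0,0,0,0,0,0,0,0;
     0,0,0,0,0,0,0,0;
     -864,-864,-864,-864,864,864,864,864;
     864,864,864,864,-864,-864,-864,-864]


/-- the entrywise cast `ℤ`-matrices → `ℂ`-matrices, as a ring hom -/
noncomputable def phi : Matrix (Fin 8) (Fin 8) ℤ →+* Matrix (Fin 8) (Fin 8) ℂ :=
  (Int.castRingHom ℂ).mapMatrix

lemma phi_mp : phi mpZ = MplusC := by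
  ext i j
  fin_cases i <;> fin_cases j <;>
    norm_num [phi, mpZ, MplusC, Matrix.map_apply, Matrix.cons_val_succ', Matrix.cons_val_zero]

lemma phi_mm : phi mmZ = MminusC := by
  ext i j
  fin_cases i <;> fin_cases j <;>
    norm_num [phi, mmZ, MminusC, Matrix.map_apply, Matrix.cons_val_succ', Matrix.cons_val_zero]

lemma q3_entry : phi q3 2 0 = 864 := by
  norm_num [phi, q3, Matrix.map_apply, Matrix.cons_val_succ', Matrix.cons_val_zero]
  change ((864 : ℤ) : ℂ) = 864
  norm_num

-- integer arithmetic facts, verified by the kernel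
lemma hmul0 : mpZ * mmZ = e0 := by decide
lemma hf1 : e0 - (1 : ℤ) • 1 = f1 := by decide
lemma hf2 : e0 - (4 : ℤ) • 1 = f2 := by decide
lemma hf3 : e0 - (16 : ℤ) • 1 = f3 := by decide
lemma hq : e0 * f1 * f2 * f3 = q3 := by decide
lemma hp : e0 * e0 * f1 * f1 * f2 * f2 * f2 * f3 = 0 := by decide

lemma smul_one_int (c : ℤ) :
    phi (c • (1 : Matrix (Fin 8) (Fin 8) ℤ)) = ((c : ℂ)) • (1 : Matrix (Fin 8) (Fin 8) ℂ) := by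
  rw [map_zsmul, map_one, Int.cast_smul_eq_zsmul]

lemma myConj_mul {C : Matrix (Fin 8) (Fin 8) ℂ} (hC : IsUnit C.det)
    (X Y : Matrix (Fin 8) (Fin 8) ℂ) :
    (C * X * C⁻¹) * (C * Y * C⁻¹) = C * (X * Y) * C⁻¹ := by
  have h := Matrix.nonsing_inv_mul C hC
  calc (C * X * C⁻¹) * (C * Y * C⁻¹) = C * X * (C⁻¹ * C) * Y * C⁻¹ := by
        simp only [Matrix.mul_assoc]
    _ = C * (X * Y) * C⁻¹ := by rw [h]; simp only [Matrix.mul_one, Matrix.mul_assoc]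

lemma myConj_sub {C : Matrix (Fin 8) (Fin 8) ℂ} (hC : IsUnit C.det)
    (X : Matrix (Fin 8) (Fin 8) ℂ) (c : ℂ) :
    (C * X * C⁻¹) - c • 1 = C * (X - c • 1) * C⁻¹ := by
  have h := Matrix.mul_nonsing_inv C hC
  rw [mul_sub, sub_mul, Matrix.mul_smul, Matrix.mul_one, Matrix.smul_mul, h]

end Aux

/-- `M₊ M₋` is not diagonalizable over `ℂ`: it is not conjugate to any
diagonal matrix. -/
theorem MplusMminus_not_diagonalizable :
    ¬ ∃ (C D : Matrix (Fin 8) (Fin 8) ℂ), IsUnit C.det ∧ D.IsDiag ∧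
      MplusC * MminusC = C * D * C⁻¹ := by
  rintro ⟨C, D, hC, hD, hEq⟩
  -- D is a genuine diagonal matrix
  set d : Fin 8 → ℂ := D.diag with hd
  have hDdiag : D = Matrix.diagonal d := (hD.diagonal_diag).symm
  -- transfer the integer computations to ℂ
  have hA : MplusC * MminusC = phi e0 := by
    rw [← phi_mp, ← phi_mm, ← map_mul, hmul0]
  have hF1 : phi e0 - (1 : ℂ) • 1 = phi f1 := by
    rw [← hf1, map_sub, smul_one_int]; norm_num
  have hF2 : phi e0 - (4 : ℂ) • 1 = phi f2 := by
    rw [← hf2, map_sub, smul_one_int]; norm_num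
  have hF3 : phi e0 - (16 : ℂ) • 1 = phi f3 := by
    rw [← hf3, map_sub, smul_one_int]; norm_num
  have hQ : phi e0 * phi f1 * phi f2 * phi f3 = phi q3 := by
    rw [← map_mul, ← map_mul, ← map_mul, hq]
  have hP : phi e0 * phi e0 * phi f1 * phi f1 * phi f2 * phi f2 * phi f2 * phi f3 = 0 := by
    simp only [← map_mul]
    rw [hp, map_zero]
  have hA' : phi e0 = C * D * C⁻¹ := hA ▸ hEq
  have hN : ∀ c : ℂ, phi e0 - c • 1 = C * (D - c • 1) * C⁻¹ := fun c => by
    rw [hA', myConj_sub hC]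
  have hDc : ∀ c : ℂ, D - c • 1 = Matrix.diagonal (fun i => d i - c) := fun c => by
    rw [hDdiag]
    ext i j
    by_cases hij : i = j
    · subst hij; simp
    · simp [Matrix.one_apply_ne hij, Matrix.diagonal_apply_ne _ hij]
  have h1 : phi f1 = C * Matrix.diagonal (fun i => d i - 1) * C⁻¹ := by
    rw [← hF1, hN 1, hDc]
  have h2 : phi f2 = C * Matrix.diagonal (fun i => d i - 4) * C⁻¹ := by
    rw [← hF2, hN 4, hDc]
  have h3 : phi f3 = C * Matrix.diagonal (fun i => d i - 16) * C⁻¹ := by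
    rw [← hF3, hN 16, hDc]
  have h0 : phi e0 = C * Matrix.diagonal d * C⁻¹ := by rw [hA', hDdiag]
  have key : C * Matrix.diagonal
      (fun i => d i * d i * (d i - 1) * (d i - 1) * (d i - 4) * (d i - 4) * (d i - 4)
        * (d i - 16)) * C⁻¹ = 0 := by
    rw [← hP, h0, h1, h2, h3]
    simp only [myConj_mul hC, Matrix.diagonal_mul_diagonal]
  have hdiag0 : ∀ i : Fin 8,
      d i * d i * (d i - 1) * (d i - 1) * (d i - 4) * (d i - 4) * (d i - 4) * (d i - 16) = 0 := by
    intro i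
    have h' : Matrix.diagonal
        (fun i => d i * d i * (d i - 1) * (d i - 1) * (d i - 4) * (d i - 4) * (d i - 4)
          * (d i - 16)) = (0 : Matrix (Fin 8) (Fin 8) ℂ) := by
      have e : Matrix.diagonal
          (fun i => d i * d i * (d i - 1) * (d i - 1) * (d i - 4) * (d i - 4) * (d i - 4)
            * (d i - 16)) = C⁻¹ * (C * Matrix.diagonal
          (fun i => d i * d i * (d i - 1) * (d i - 1) * (d i - 4) * (d i - 4) * (d i - 4)
            * (d i - 16)) * C⁻¹) * C := by
        simp only [Matrix.mul_assoc, Matrix.nonsing_inv_mul C hC, Matrix.mul_one]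
        rw [← Matrix.mul_assoc, Matrix.nonsing_inv_mul C hC, Matrix.one_mul]
      rw [e, key, Matrix.mul_zero, Matrix.zero_mul]
    have := congrFun (congrFun h' i) i
    simpa using this
  have hq0 : ∀ i : Fin 8, d i * (d i - 1) * (d i - 4) * (d i - 16) = 0 := by
    intro i
    have h := hdiag0 i
    have : d i = 0 ∨ d i - 1 = 0 ∨ d i - 4 = 0 ∨ d i - 16 = 0 := by
      rcases mul_eq_zero.mp h with h | h
      · rcases mul_eq_zero.mp h with h | h
        · rcases mul_eq_zero.mp h with h | h
          · rcases mul_eq_zero.mp h with h | h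
            · rcases mul_eq_zero.mp h with h | h
              · rcases mul_eq_zero.mp h with h | h
                · rcases mul_eq_zero.mp h with h | h
                  · exact Or.inl h
                  · exact Or.inl h
                · exact Or.inr (Or.inl h)
              · exact Or.inr (Or.inl h)
            · exact Or.inr (Or.inr (Or.inl h))
          · exact Or.inr (Or.inr (Or.inl h))
        · exact Or.inr (Or.inr (Or.inl h))
      · exact Or.inr (Or.inr (Or.inr h))
    rcases this with h | h | h | h <;> rw [h] <;> ring
  have hq0' : Matrix.diagonal (fun i => d i * (d i - 1) * (d i - 4) * (d i - 16))
      = (0 : Matrix (Fin 8) (Fin 8) ℂ) := by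
    ext i j
    by_cases hij : i = j
    · subst hij
      simpa using hq0 i
    · simp [Matrix.diagonal_apply_ne _ hij]
  have hQ0 : phi q3 = 0 := by
    rw [← hQ, h0, h1, h2, h3]
    simp only [myConj_mul hC, Matrix.diagonal_mul_diagonal]
    rw [hq0']
    simp
  have hbad := congrFun (congrFun hQ0 2) 0
  rw [q3_entry] at hbad
  simp at hbad
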